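/- Let n ≥ 3 and 2 ≤ k ≤ n with 2k ≥ n, and let Λ = (λ_1,…,λ_n) ∈ ℝ^n. If A_Λ ∈ Γ_k^+, then λ_i > 0 for every 1 ≤ i ≤ n; if A_Λ ∈ Γ̄_k^+, then λ_i ≥ 0 for every 1 ≤ i ≤ n. (This is the pointwise eigenvalue form of the statement that positive, respectively nonnegative, Γ_k-curvature for k ≥ n/2 implies positive, respectively nonnegative, Ricci curvature.) -/

import Mathlib

/-- The `k`-th elementary symmetric polynomial of `x : Fin n → ℝ`. -/
noncomputable def sigmaElem (n k : ℕ) (x : Fin n → ℝ) : ℝ :=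
  ∑ s ∈ Finset.univ.powersetCard k, ∏ i ∈ s, x i

/-- The Gårding cone `Γ_k^+ ⊆ ℝ^n`: the connected component of
`{σ_k > 0}` containing `(1, …, 1)`. -/
def GammaPlus (n k : ℕ) : Set (Fin n → ℝ) :=
  connectedComponentIn {x | 0 < sigmaElem n k x} (fun _ => 1)

/-- `A_Λ = Λ − (Σ_i λ_i / (2(n−1))) · (1,…,1)`. -/
noncomputable def ALam (n : ℕ) (Λ : Fin n → ℝ) : Fin n → ℝ :=
  fun i => Λ i - (∑ j, Λ j) / (2 * ((n : ℝ) - 1))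

open Polynomial Multiset

namespace GammaAux

lemma esymm_zero' (s : Multiset ℝ) : s.esymm 0 = 1 := by
  simp [Multiset.esymm, Multiset.powersetCard_zero_left]

lemma esymm_of_card_lt {s : Multiset ℝ} {j : ℕ} (h : Multiset.card s < j) :
    s.esymm j = 0 := by
  simp [Multiset.esymm, Multiset.powersetCard_eq_empty _ h]

lemma esymm_cons (a : ℝ) (s : Multiset ℝ) (j : ℕ) :
    (a ::ₘ s).esymm (j + 1) = s.esymm (j + 1) + a * s.esymm j := by
  simp only [Multiset.esymm, Multiset.powersetCard_cons, Multiset.map_add, Multiset.sum_add,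
    Multiset.map_map, Function.comp_def, Multiset.prod_cons]
  rw [Multiset.sum_map_mul_left]

lemma esymm_one' (s : Multiset ℝ) : s.esymm 1 = s.sum := by
  induction s using Multiset.induction_on with
  | empty => rw [esymm_of_card_lt (by simp)]; simp
  | cons a s ih => rw [show (1:ℕ) = 0 + 1 from rfl, esymm_cons, esymm_zero', ih]; simp; ring

lemma esymm_nonneg {s : Multiset ℝ} (h : ∀ x ∈ s, 0 ≤ x) (j : ℕ) : 0 ≤ s.esymm j := by
  induction s using Multiset.induction_on generalizing j with
  | empty =>
    match j with
    | 0 => rw [esymm_zero']; norm_num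
    | (j+1) => rw [esymm_of_card_lt (by simp)]
  | cons a s ih =>
    match j with
    | 0 => rw [esymm_zero']; norm_num
    | (j+1) =>
      rw [esymm_cons]
      have ha : 0 ≤ a := h a (Multiset.mem_cons_self _ _)
      have h' : ∀ x ∈ s, 0 ≤ x := fun x hx => h x (Multiset.mem_cons_of_mem hx)
      have := ih h' j
      have := ih h' (j+1)
      positivity

lemma esymm_pos {s : Multiset ℝ} (h : ∀ x ∈ s, 0 < x) {j : ℕ} (hj : j ≤ Multiset.card s) :
    0 < s.esymm j := by
  induction s using Multiset.induction_on generalizing j with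
  | empty =>
    obtain rfl : j = 0 := Nat.le_zero.mp (by simpa using hj)
    rw [esymm_zero']; norm_num
  | cons a s ih =>
    match j with
    | 0 => rw [esymm_zero']; norm_num
    | (j+1) =>
      rw [esymm_cons]
      have ha : 0 < a := h a (Multiset.mem_cons_self _ _)
      have h' : ∀ x ∈ s, 0 < x := fun x hx => h x (Multiset.mem_cons_of_mem hx)
      have hj' : j ≤ Multiset.card s := by simp at hj; omega
      have h1 : 0 < a * s.esymm j := mul_pos ha (ih h' hj')
      have h2 : 0 ≤ s.esymm (j+1) := esymm_nonneg (fun x hx => (h' x hx).le) _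
      linarith

/-- AM–GM / Cauchy–Schwarz type inequality: `k² eₖ ≤ e₁ e_{k-1}` for positive reals. -/
lemma esymm_amgm (s : Multiset ℝ) (h : ∀ x ∈ s, 0 < x) :
    (Multiset.card s : ℝ) ^ 2 * s.esymm (Multiset.card s) ≤
      s.sum * s.esymm (Multiset.card s - 1) := by
  induction s using Multiset.induction_on with
  | empty => simp [esymm_zero']
  | cons a s ih =>
    have ha : 0 < a := h a (Multiset.mem_cons_self _ _)
    have h' : ∀ x ∈ s, 0 < x := fun x hx => h x (Multiset.mem_cons_of_mem hx)
    rcases Nat.eq_zero_or_pos (Multiset.card s) with hm | hm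
    · have : s = 0 := Multiset.card_eq_zero.mp hm
      subst this
      simp only [Multiset.card_cons, Multiset.card_zero, Multiset.sum_cons, Multiset.sum_zero]
      rw [show (0:ℕ)+1 = 1 from rfl, show (1:ℕ) - 1 = 0 from rfl, esymm_zero',
        show (1:ℕ) = 0 + 1 from rfl, esymm_cons, esymm_zero', esymm_of_card_lt (by simp)]
      norm_num
    · obtain ⟨m, hm'⟩ : ∃ m, Multiset.card s = m + 1 := ⟨Multiset.card s - 1, by omega⟩
      have IH := ih h'
      rw [hm', Nat.add_sub_cancel] at IH
      have hcard : Multiset.card (a ::ₘ s) = (m + 1) + 1 := by simp [hm']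
      rw [hcard, Nat.add_sub_cancel, esymm_cons, esymm_cons, Multiset.sum_cons]
      have htop : s.esymm (m + 1 + 1) = 0 := esymm_of_card_lt (by omega)
      rw [htop]
      set e0 := s.esymm m with he0
      set e1 := s.esymm (m + 1) with he1
      have he1pos : 0 < e1 := esymm_pos h' (by omega)
      have he0pos : 0 < e0 := esymm_pos h' (by omega)
      have hS : 0 < s.sum := by
        have := esymm_pos h' (show 1 ≤ Multiset.card s by omega)
        rwa [esymm_one'] at this
      have huv : (a^2*e0) * (s.sum*e1) ≥ (((m:ℝ)+1)*a*e1)^2 := by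
        have := mul_le_mul_of_nonneg_left IH (le_of_lt (mul_pos (mul_pos ha ha) he1pos))
        push_cast at this ⊢
        nlinarith [this]
      have h4 : ((a^2*e0) + (s.sum*e1))^2 ≥ 4 * (((m:ℝ)+1)*a*e1)^2 := by
        nlinarith [sq_nonneg (a^2*e0 - s.sum*e1), huv]
      have key : (a^2*e0) + (s.sum*e1) ≥ 2*(((m:ℝ)+1)*a*e1) := by
        have hW : (0:ℝ) ≤ 2*(((m:ℝ)+1)*a*e1) := by positivity
        have hu : (0:ℝ) ≤ (a^2*e0) + (s.sum*e1) := by positivity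
        have h4' : (2*(((m:ℝ)+1)*a*e1))^2 ≤ ((a^2*e0) + (s.sum*e1))^2 := by nlinarith [h4]
        exact (pow_le_pow_iff_left₀ hW hu (by norm_num)).mp h4' 
      push_cast
      nlinarith [mul_le_mul_of_nonneg_left IH ha.le, mul_pos ha he1pos, key]


lemma splits_derivative {p : ℝ[X]} (hp : p.Splits) :
    (derivative p).Splits := by
  rw [splits_iff_card_roots] at hp ⊢
  have h1 := p.card_roots_le_derivative
  have h2 := (derivative p).card_roots'
  have h3 := p.natDegree_derivative_le
  omega

lemma splits_iterate_derivative {p : ℝ[X]} (hp : p.Splits) (r : ℕ) :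
    (derivative^[r] p).Splits := by
  induction r with
  | zero => exact hp
  | succ r ih => rw [Function.iterate_succ_apply']; exact splits_derivative ih

lemma splits_prod_X_add_C (M : Multiset ℝ) :
    ((M.map fun r => X + C r).prod).Splits := by
  induction M using Multiset.induction_on with
  | empty => simpa using Splits.one
  | cons a s ih =>
    rw [Multiset.map_cons, Multiset.prod_cons]
    refine Splits.mul ?_ ih
    have : X + C a = X - C (-a) := by rw [map_neg, sub_neg_eq_add]
    rw [this]; exact Splits.X_sub_C _

lemma descFactorial_pos {a b : ℕ} (h : b ≤ a) : 0 < a.descFactorial b := by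
  have := Nat.factorial_mul_descFactorial h
  have := Nat.factorial_pos a
  by_contra hc
  push_neg at hc
  interval_cases (a.descFactorial b)
  omega


/-- MASTER lemma: a real multiset whose first `k` elementary symmetric functions are
nonnegative, with the `k`-th strictly positive, has esymm's proportional to those of a
multiset of `k` positive reals. -/
lemma master (m k : ℕ) (hk1 : 1 ≤ k) (hkm : k ≤ m) (M : Multiset ℝ)
    (hM : Multiset.card M = m)
    (h0 : ∀ j, 1 ≤ j → j ≤ k → 0 ≤ M.esymm j) (hksp : 0 < M.esymm k) :
    ∃ s : Multiset ℝ, Multiset.card s = k ∧ (∀ x ∈ s, 0 < x) ∧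
      ∀ j, j ≤ k → M.esymm j * (((m - j).descFactorial (m - k) : ℕ) : ℝ)
          = ((m.descFactorial (m - k) : ℕ) : ℝ) * s.esymm j := by
  classical
  set P : ℝ[X] := (M.map fun r => X + C r).prod with hP
  have hmonic : P.Monic := monic_multiset_prod_of_monic _ _ (fun r _ => monic_X_add_C r)
  have hdegP : P.natDegree = m := by
    rw [hP, natDegree_multiset_prod_of_monic _ (fun r hr => by
      obtain ⟨a, _, rfl⟩ := Multiset.mem_map.mp hr; exact monic_X_add_C a)]
    simp [Multiset.map_map, Function.comp_def, natDegree_X_add_C, hM]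
  have hPcoeff : ∀ i, i ≤ m → P.coeff i = M.esymm (m - i) := by
    intro i hi
    rw [hP, Multiset.prod_X_add_C_coeff M (by omega : i ≤ Multiset.card M), hM]
  set Q : ℝ[X] := derivative^[m - k] P with hQ
  have hQsplit : Q.Splits := splits_iterate_derivative (splits_prod_X_add_C M) _
  have hQcoeff : ∀ i, Q.coeff i =
      (((i + (m - k)).descFactorial (m - k) : ℕ) : ℝ) * P.coeff (i + (m - k)) := by
    intro i
    rw [hQ, Polynomial.coeff_iterate_derivative, nsmul_eq_mul]
  have hQtop : Q.coeff k = (((m.descFactorial (m - k) : ℕ)) : ℝ) := by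
    rw [hQcoeff k, show k + (m - k) = m by omega, hPcoeff m le_rfl, Nat.sub_self, esymm_zero',
      mul_one]
  have hQtopne : Q.coeff k ≠ 0 := by
    rw [hQtop]
    exact_mod_cast (descFactorial_pos (by omega : m - k ≤ m)).ne'
  have hQdeg : Q.natDegree = k := by
    have h1 := Polynomial.natDegree_iterate_derivative P (m - k)
    have h2 := Polynomial.le_natDegree_of_ne_zero hQtopne
    rw [← hQ] at *
    omega
  have hQne : Q ≠ 0 := fun h => hQtopne (by simp [h])
  -- coefficients of Q are nonneg, and coeff 0 is positive
  have hQcoeff' : ∀ j, j ≤ k → Q.coeff (k - j) =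
      (((m - j).descFactorial (m - k) : ℕ) : ℝ) * M.esymm j := by
    intro j hj
    rw [hQcoeff, show k - j + (m - k) = m - j by omega,
      hPcoeff _ (by omega), show m - (m - j) = j by omega]
  have hQnonneg : ∀ i, 0 ≤ Q.coeff i := by
    intro i
    rcases le_or_gt i k with hik | hik
    · obtain ⟨j, hjk, rfl⟩ : ∃ j, j ≤ k ∧ i = k - j := ⟨k - i, by omega, by omega⟩
      rw [hQcoeff' j hjk]
      rcases Nat.eq_zero_or_pos j with rfl | hj
      · rw [esymm_zero']; positivity
      · exact mul_nonneg (by positivity) (h0 j hj hjk)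
    · have : Q.natDegree < i := by omega
      rw [Polynomial.coeff_eq_zero_of_natDegree_lt this]
  have hQ0pos : 0 < Q.coeff 0 := by
    have := hQcoeff' k le_rfl
    rw [Nat.sub_self] at this
    rw [this]
    have := descFactorial_pos (le_refl (m - k))
    positivity
  -- all roots of Q are negative
  have hroots_neg : ∀ r ∈ Q.roots, r < 0 := by
    intro r hr
    by_contra hc
    push_neg at hc
    have heval : Q.eval r = 0 := (Polynomial.mem_roots hQne).mp hr
    have : 0 < Q.eval r := by
      rw [Polynomial.eval_eq_sum_range]
      apply Finset.sum_pos'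
      · intro i _
        exact mul_nonneg (hQnonneg i) (by positivity)
      · exact ⟨0, Finset.mem_range.mpr (by omega), by simpa using hQ0pos⟩
    linarith
  -- factor Q over its roots
  have hcardroots : Multiset.card Q.roots = k := by
    rw [splits_iff_card_roots.mp hQsplit, hQdeg]
  set s : Multiset ℝ := Q.roots.map (fun r => -r) with hs
  have hcards : Multiset.card s = k := by rw [hs, Multiset.card_map, hcardroots]
  have hspos : ∀ x ∈ s, 0 < x := by
    intro x hx
    obtain ⟨r, hr, rfl⟩ := Multiset.mem_map.mp hx
    have := hroots_neg r hr
    linarith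
  refine ⟨s, hcards, hspos, ?_⟩
  intro j hj
  have hfact : Q = C (((m.descFactorial (m - k) : ℕ)) : ℝ) *
      (s.map fun a => X + C a).prod := by
    have h1 := Polynomial.Splits.eq_prod_roots hQsplit
    have h2 : Q.leadingCoeff = (((m.descFactorial (m - k) : ℕ)) : ℝ) := by
      rw [Polynomial.leadingCoeff, hQdeg, hQtop]
    rw [h2] at h1
    rw [h1, hs, Multiset.map_map]
    congr 1
    refine congrArg Multiset.prod (Multiset.map_congr rfl ?_)
    intro r _
    simp [Function.comp, sub_eq_add_neg]
  have hqc : Q.coeff (k - j) = (((m.descFactorial (m - k) : ℕ)) : ℝ) * s.esymm j := by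
    rw [hfact, Polynomial.coeff_C_mul,
      Multiset.prod_X_add_C_coeff s (by rw [hcards]; omega : k - j ≤ Multiset.card s),
      hcards, show k - (k - j) = j by omega]
  rw [← hqc, hQcoeff' j hj, mul_comm]


/-- The key factorial identity. Here `k = b+1`, `m = a+b+1`, `a = m-k`. -/
lemma nat_identity (a b : ℕ) :
    (b + 1) * (a.descFactorial a) * ((a + b + 1).descFactorial a) * (a + 1)
      = (a + b + 1) * ((a + b).descFactorial a) * ((a + 1).descFactorial a) := by
  have h1 : (a + b + 1).descFactorial a * Nat.factorial (b + 1) = Nat.factorial (a + b + 1) := by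
    have := Nat.factorial_mul_descFactorial (n := a + b + 1) (k := a) (by omega)
    rw [show a + b + 1 - a = b + 1 by omega] at this
    rw [Nat.mul_comm] at this
    exact this
  have h2 : (a + b).descFactorial a * Nat.factorial b = Nat.factorial (a + b) := by
    have := Nat.factorial_mul_descFactorial (n := a + b) (k := a) (by omega)
    rw [show a + b - a = b by omega] at this
    rw [Nat.mul_comm] at this
    exact this
  have h3 : (a + 1).descFactorial a = (a + 1) * Nat.factorial a := by
    have := Nat.factorial_mul_descFactorial (n := a + 1) (k := a) (by omega)
    rw [show a + 1 - a = 1 by omega, Nat.factorial_one, one_mul] at this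
    rw [this, Nat.factorial_succ]
  apply Nat.eq_of_mul_eq_mul_right (Nat.factorial_pos (b + 1))
  have hfs : Nat.factorial (b + 1) = (b + 1) * Nat.factorial b := Nat.factorial_succ b
  have hfs2 : Nat.factorial (a + b + 1) = (a + b + 1) * Nat.factorial (a + b) :=
    Nat.factorial_succ (a + b)
  calc (b + 1) * (a.descFactorial a) * ((a + b + 1).descFactorial a) * (a + 1)
        * Nat.factorial (b + 1)
      = (b + 1) * Nat.factorial a * (a + 1)
          * ((a + b + 1).descFactorial a * Nat.factorial (b + 1)) := by
        rw [Nat.descFactorial_self]; ring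
    _ = (b + 1) * Nat.factorial a * (a + 1) * Nat.factorial (a + b + 1) := by rw [h1]
    _ = ((a + b).descFactorial a * Nat.factorial b) * ((a + 1) * Nat.factorial a) * (a + b + 1)
          * (b + 1) := by rw [h2, hfs2]; ring
    _ = (a + b + 1) * ((a + b).descFactorial a) * ((a + 1).descFactorial a)
          * Nat.factorial (b + 1) := by rw [h3, hfs]; ring

/-- Newton–Maclaurin-type corollary. -/
lemma maclaurin (m k : ℕ) (hk1 : 1 ≤ k) (hkm : k ≤ m) (M : Multiset ℝ)
    (hM : Multiset.card M = m)
    (h0 : ∀ j, 1 ≤ j → j ≤ k → 0 ≤ M.esymm j) (hksp : 0 < M.esymm k) :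
    (k : ℝ) * (m : ℝ) * M.esymm k ≤
      ((m - k + 1 : ℕ) : ℝ) * (M.esymm 1 * M.esymm (k - 1)) := by
  obtain ⟨s, hcards, hspos, hid⟩ := master m k hk1 hkm M hM h0 hksp
  have hF : (k : ℝ) ^ 2 * s.esymm k ≤ s.esymm 1 * s.esymm (k - 1) := by
    have hF0 := esymm_amgm s hspos
    rw [hcards, ← esymm_one'] at hF0
    exact hF0
  have i1 : M.esymm 1 * (((m - 1).descFactorial (m - k) : ℕ) : ℝ)
      = ((m.descFactorial (m - k) : ℕ) : ℝ) * s.esymm 1 := hid 1 hk1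
  have ik1 : M.esymm (k - 1) * (((m - (k - 1)).descFactorial (m - k) : ℕ) : ℝ)
      = ((m.descFactorial (m - k) : ℕ) : ℝ) * s.esymm (k - 1) := hid (k - 1) (by omega)
  have ik : M.esymm k * (((m - k).descFactorial (m - k) : ℕ) : ℝ)
      = ((m.descFactorial (m - k) : ℕ) : ℝ) * s.esymm k := hid k le_rfl
  rw [show m - (k - 1) = m - k + 1 by omega] at ik1
  set D : ℝ := ((m.descFactorial (m - k) : ℕ) : ℝ) with hD
  set d1 : ℝ := (((m - 1).descFactorial (m - k) : ℕ) : ℝ) with hd1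
  set dk1 : ℝ := (((m - k + 1).descFactorial (m - k) : ℕ) : ℝ) with hdk1
  set dk : ℝ := (((m - k).descFactorial (m - k) : ℕ) : ℝ) with hdk
  have hDpos : 0 < D := by
    rw [hD]; exact_mod_cast descFactorial_pos (show m - k ≤ m by omega)
  have hd1pos : 0 < d1 := by
    rw [hd1]; exact_mod_cast descFactorial_pos (show m - k ≤ m - 1 by omega)
  have hdk1pos : 0 < dk1 := by
    rw [hdk1]; exact_mod_cast descFactorial_pos (show m - k ≤ m - k + 1 by omega)
  have hdkpos : 0 < dk := by
    rw [hdk]; exact_mod_cast descFactorial_pos (le_refl (m - k))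
  have hNI : (k : ℝ) * dk * D * ((m - k + 1 : ℕ) : ℝ) = (m : ℝ) * d1 * dk1 := by
    rw [hD, hd1, hdk1, hdk]
    have hthis := nat_identity (m - k) (k - 1)
    rw [show m - k + (k - 1) + 1 = m by omega, show m - k + (k - 1) = m - 1 by omega,
      show k - 1 + 1 = k by omega] at hthis
    exact_mod_cast hthis
  have hmain : (k : ℝ) * (m : ℝ) * M.esymm k * (d1 * dk1)
      ≤ ((m - k + 1 : ℕ) : ℝ) * (M.esymm 1 * M.esymm (k - 1)) * (d1 * dk1) := by
    have lhs_eq : (k : ℝ) * (m : ℝ) * M.esymm k * (d1 * dk1)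
        = D ^ 2 * ((m - k + 1 : ℕ) : ℝ) * ((k : ℝ) ^ 2 * s.esymm k) := by
      calc (k : ℝ) * (m : ℝ) * M.esymm k * (d1 * dk1)
          = M.esymm k * (k : ℝ) * ((m : ℝ) * d1 * dk1) := by ring
        _ = M.esymm k * (k : ℝ) * ((k : ℝ) * dk * D * ((m - k + 1 : ℕ) : ℝ)) := by rw [hNI]
        _ = (k : ℝ) ^ 2 * D * ((m - k + 1 : ℕ) : ℝ) * (M.esymm k * dk) := by ring
        _ = (k : ℝ) ^ 2 * D * ((m - k + 1 : ℕ) : ℝ) * (D * s.esymm k) := by rw [ik]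
        _ = D ^ 2 * ((m - k + 1 : ℕ) : ℝ) * ((k : ℝ) ^ 2 * s.esymm k) := by ring
    have rhs_eq : ((m - k + 1 : ℕ) : ℝ) * (M.esymm 1 * M.esymm (k - 1)) * (d1 * dk1)
        = D ^ 2 * ((m - k + 1 : ℕ) : ℝ) * (s.esymm 1 * s.esymm (k - 1)) := by
      calc ((m - k + 1 : ℕ) : ℝ) * (M.esymm 1 * M.esymm (k - 1)) * (d1 * dk1)
          = ((m - k + 1 : ℕ) : ℝ) * ((M.esymm 1 * d1) * (M.esymm (k - 1) * dk1)) := by ring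
        _ = ((m - k + 1 : ℕ) : ℝ) * ((D * s.esymm 1) * (D * s.esymm (k - 1))) := by
            rw [i1, ik1]
        _ = D ^ 2 * ((m - k + 1 : ℕ) : ℝ) * (s.esymm 1 * s.esymm (k - 1)) := by ring
    rw [lhs_eq, rhs_eq]
    have hnn : (0:ℝ) ≤ D ^ 2 * ((m - k + 1 : ℕ) : ℝ) := by positivity
    exact mul_le_mul_of_nonneg_left hF hnn
  exact le_of_mul_le_mul_right hmain (by positivity)


/-! ### Bridges between `sigmaElem` and multiset `esymm` -/

lemma sigma_eq_esymm (n j : ℕ) (x : Fin n → ℝ) :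
    sigmaElem n j x = (Finset.univ.val.map x).esymm j :=
  (Finset.esymm_map_val x Finset.univ j).symm

lemma card_univ_map (n : ℕ) (x : Fin n → ℝ) :
    Multiset.card (Finset.univ.val.map x) = n := by
  rw [Multiset.card_map]
  exact (Finset.card_univ).trans (Fintype.card_fin n)

lemma cons_decomp (n : ℕ) (x : Fin n → ℝ) (i₀ : Fin n) :
    (Finset.univ.val.map x) = x i₀ ::ₘ ((Finset.univ.erase i₀).val.map x) := by
  conv_lhs => rw [← Multiset.cons_erase (show i₀ ∈ Finset.univ.val from Finset.mem_univ i₀)]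
  rw [Multiset.map_cons, Finset.erase_val]

lemma sigma_one_sum (n : ℕ) (x : Fin n → ℝ) : sigmaElem n 1 x = ∑ i, x i := by
  simp [sigmaElem, Finset.powersetCard_one, Finset.sum_map]

lemma sigma_const_one (n j : ℕ) : sigmaElem n j (fun _ => (1:ℝ)) = (n.choose j : ℝ) := by
  simp [sigmaElem, Finset.sum_const, Finset.card_powersetCard]

lemma sigma_continuous (n j : ℕ) : Continuous (fun x : Fin n → ℝ => sigmaElem n j x) := by
  unfold sigmaElem
  exact continuous_finset_sum _ fun s _ =>
    continuous_finset_prod _ fun i _ => continuous_apply i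

/-! ### The topological step: the Gårding cone has all σⱼ positive -/

lemma gamma_subset_S (n k : ℕ) (hk1 : 1 ≤ k) (hkn : k ≤ n) :
    GammaPlus n k ⊆ {x | ∀ j, 1 ≤ j → j ≤ k → 0 < sigmaElem n j x} := by
  set S := {x : Fin n → ℝ | ∀ j, 1 ≤ j → j ≤ k → 0 < sigmaElem n j x} with hS
  set V := {x : Fin n → ℝ | ∃ j, 1 ≤ j ∧ j ≤ k ∧ sigmaElem n j x < 0} with hV
  set U := {x : Fin n → ℝ | 0 < sigmaElem n k x} with hU
  have hSopen : IsOpen S := by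
    have : S = ⋂ j ∈ Finset.Icc 1 k, {x : Fin n → ℝ | 0 < sigmaElem n j x} := by
      ext x
      simp only [hS, Set.mem_setOf_eq, Set.mem_iInter, Finset.mem_Icc]
      constructor
      · rintro h j ⟨h1, h2⟩; exact h j h1 h2
      · intro h j h1 h2; exact h j ⟨h1, h2⟩
    rw [this]
    exact isOpen_biInter_finset fun j _ => isOpen_lt continuous_const (sigma_continuous n j)
  have hVopen : IsOpen V := by
    have : V = ⋃ j ∈ Finset.Icc 1 k, {x : Fin n → ℝ | sigmaElem n j x < 0} := by
      ext x
      simp only [hV, Set.mem_setOf_eq, Set.mem_iUnion, Finset.mem_Icc]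
      constructor
      · rintro ⟨j, h1, h2, h3⟩; exact ⟨j, ⟨h1, h2⟩, h3⟩
      · rintro ⟨j, ⟨h1, h2⟩, h3⟩; exact ⟨j, h1, h2, h3⟩
    rw [this]
    exact isOpen_biUnion fun j _ => isOpen_lt (sigma_continuous n j) continuous_const
  have hdisj : Disjoint S V := by
    rw [Set.disjoint_left]
    rintro x hxS ⟨j, h1, h2, h3⟩
    exact absurd (hxS j h1 h2) (by linarith)
  have hcover : U ⊆ S ∪ V := by
    intro x hx
    by_cases h : ∃ j, 1 ≤ j ∧ j ≤ k ∧ sigmaElem n j x < 0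
    · exact Or.inr h
    · push_neg at h
      left
      intro j hj1 hj2
      obtain ⟨s, hcards, hspos, hid⟩ := master n k hk1 hkn (Finset.univ.val.map x)
        (card_univ_map n x)
        (fun j hj1 hj2 => by rw [← sigma_eq_esymm]; exact h j hj1 hj2)
        (by rw [← sigma_eq_esymm]; exact hx)
      rw [sigma_eq_esymm]
      have hd : (0:ℝ) < (((n - j).descFactorial (n - k) : ℕ) : ℝ) := by
        exact_mod_cast descFactorial_pos (show n - k ≤ n - j by omega)
      have hD : (0:ℝ) < ((n.descFactorial (n - k) : ℕ) : ℝ) := by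
        exact_mod_cast descFactorial_pos (show n - k ≤ n by omega)
      have hsp : 0 < s.esymm j := esymm_pos hspos (by omega)
      have := hid j hj2
      nlinarith [this, hd, hD, hsp]
  have h1U : (fun _ : Fin n => (1:ℝ)) ∈ U := by
    rw [hU, Set.mem_setOf_eq, sigma_const_one]
    exact_mod_cast Nat.choose_pos hkn
  have h1S : (fun _ : Fin n => (1:ℝ)) ∈ S := by
    intro j hj1 hj2
    rw [sigma_const_one]
    exact_mod_cast Nat.choose_pos (hj2.trans hkn)
  have h1Γ : (fun _ : Fin n => (1:ℝ)) ∈ GammaPlus n k := mem_connectedComponentIn h1U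
  have hΓsub : GammaPlus n k ⊆ U := connectedComponentIn_subset _ _
  exact isPreconnected_connectedComponentIn.subset_left_of_subset_union hSopen hVopen hdisj
    (hΓsub.trans hcover) ⟨_, h1Γ, h1S⟩

/-! ### The key pointwise inequality -/

lemma key (n k : ℕ) (hn : 3 ≤ n) (hk2 : 2 ≤ k) (hkn : k ≤ n) (h2k : n ≤ 2 * k)
    (x : Fin n → ℝ) (hpos : ∀ j, 1 ≤ j → j ≤ k → 0 < sigmaElem n j x) :
    ∀ i, 0 < ((n:ℝ) - 2) * x i + sigmaElem n 1 x := by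
  obtain ⟨i₀, -, hmin⟩ := Finset.exists_min_image Finset.univ x
    ⟨⟨0, by omega⟩, Finset.mem_univ _⟩
  have hs1 : 0 < sigmaElem n 1 x := hpos 1 (by omega) (by omega)
  have hn2 : (0:ℝ) ≤ (n:ℝ) - 2 := by
    have : (3:ℝ) ≤ (n:ℝ) := by exact_mod_cast hn
    linarith
  have hmain : 0 < ((n:ℝ) - 2) * x i₀ + sigmaElem n 1 x := by
    rcases lt_or_ge 0 (x i₀) with hx0 | hx0
    · have : 0 ≤ ((n:ℝ) - 2) * x i₀ := mul_nonneg hn2 hx0.le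
      linarith
    · -- hard case : x i₀ ≤ 0
      set M' := (Finset.univ.erase i₀).val.map x with hM'
      have hcons : (Finset.univ.val.map x) = x i₀ ::ₘ M' := cons_decomp n x i₀
      have hcardM' : Multiset.card M' = n - 1 := by
        rw [hM', Multiset.card_map, ← Finset.card_def, Finset.card_erase_of_mem
          (Finset.mem_univ i₀), Finset.card_univ, Fintype.card_fin]
      have hrec : ∀ j, sigmaElem n (j+1) x = M'.esymm (j+1) + x i₀ * M'.esymm j := by
        intro j
        rw [sigma_eq_esymm, hcons, esymm_cons]
      have hpos' : ∀ j, j ≤ k - 1 → 0 < M'.esymm j := by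
        intro j
        induction j with
        | zero => intro _; rw [esymm_zero']; norm_num
        | succ j ih =>
          intro hj
          have h1 : 0 < M'.esymm j := ih (by omega)
          have h2 : 0 < sigmaElem n (j+1) x := hpos (j+1) (by omega) (by omega)
          rw [hrec j] at h2
          have h3 : x i₀ * M'.esymm j ≤ 0 := mul_nonpos_of_nonpos_of_nonneg hx0 h1.le
          linarith
      have hA : 0 < M'.esymm (k-1) := hpos' (k-1) le_rfl
      have hsk : 0 < M'.esymm k + x i₀ * M'.esymm (k-1) := by
        have h4 := hpos k (by omega) le_rfl
        rw [show k = (k-1)+1 by omega, hrec (k-1)] at h4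
        convert h4 using 3 <;> omega
      have hB : 0 < M'.esymm k := by
        have h3 : x i₀ * M'.esymm (k-1) ≤ 0 := mul_nonpos_of_nonpos_of_nonneg hx0 hA.le
        linarith
      have hkn' : k ≤ n - 1 := by
        by_contra hc
        push_neg at hc
        rw [esymm_of_card_lt (by omega)] at hB
        linarith
      have hmac := maclaurin (n-1) k (by omega) hkn' M' hcardM'
        (fun j hj1 hj2 => by
          rcases Nat.lt_or_ge j k with hlt | hge
          · exact (hpos' j (by omega)).le
          · rw [show j = k by omega]; exact hB.le) hB
      -- convert the casts in hmac
      have hc1 : ((n-1 : ℕ) : ℝ) = (n:ℝ) - 1 := by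
        push_cast [Nat.cast_sub (show 1 ≤ n by omega)]; ring
      have hc2 : ((n-1-k+1 : ℕ) : ℝ) = (n:ℝ) - (k:ℝ) := by
        rw [show n-1-k+1 = n-k by omega]
        push_cast [Nat.cast_sub (show k ≤ n by omega)]; ring
      rw [hc1, hc2] at hmac
      -- hmac : k * (n-1) * B ≤ (n-k) * (e1' * A)
      have hstep : 0 < (k:ℝ) * ((n:ℝ)-1) * (x i₀) + ((n:ℝ)-(k:ℝ)) * M'.esymm 1 := by
        have hkr : (0:ℝ) < (k:ℝ) * ((n:ℝ)-1) := by
          have : (2:ℝ) ≤ (k:ℝ) := by exact_mod_cast hk2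
          have : (3:ℝ) ≤ (n:ℝ) := by exact_mod_cast hn
          nlinarith
        have h5 : 0 < M'.esymm (k-1) *
            ((k:ℝ) * ((n:ℝ)-1) * (x i₀) + ((n:ℝ)-(k:ℝ)) * M'.esymm 1) := by
          nlinarith [mul_pos hkr hsk]
        by_contra hcon
        push_neg at hcon
        nlinarith [hA, h5]
      have hσ1 : sigmaElem n 1 x = M'.esymm 1 + x i₀ := by
        rw [show (1:ℕ) = 0+1 from rfl, hrec 0, esymm_zero']
        ring
      -- final arithmetic: n(k-1) x + (n-k) σ₁ > 0 and 2k ≥ n imply (n-2)x + σ₁ > 0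
      have hNk : (0:ℝ) < (n:ℝ) * ((k:ℝ) - 1) := by
        have h6 : (2:ℝ) ≤ (k:ℝ) := by exact_mod_cast hk2
        have h7 : (3:ℝ) ≤ (n:ℝ) := by exact_mod_cast hn
        nlinarith
      have h2k' : (n:ℝ) ≤ 2 * (k:ℝ) := by exact_mod_cast h2k
      have h7 : (3:ℝ) ≤ (n:ℝ) := by exact_mod_cast hn
      have h6 : (2:ℝ) ≤ (k:ℝ) := by exact_mod_cast hk2
      -- from hstep and hσ1 : n(k-1) x + (n-k) σ₁ > 0
      have hfin : 0 < (n:ℝ) * ((k:ℝ)-1) * (x i₀) + ((n:ℝ)-(k:ℝ)) * sigmaElem n 1 x := by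
        rw [hσ1]; nlinarith [hstep]
      nlinarith [hfin, hs1, mul_nonneg (mul_nonneg hn2 (sub_nonneg.mpr h6)) hs1.le,
        mul_nonneg hn2 (sub_nonneg.mpr (show (1:ℝ) ≤ (k:ℝ) by linarith))]
  intro i
  have hxi := hmin i (Finset.mem_univ i)
  have := mul_le_mul_of_nonneg_left hxi hn2
  linarith


lemma alam_identity (n : ℕ) (hn : 3 ≤ n) (Λ : Fin n → ℝ) (i : Fin n) :
    ((n:ℝ) - 2) * (ALam n Λ) i + sigmaElem n 1 (ALam n Λ) = ((n:ℝ) - 2) * Λ i := by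
  have h3 : (3:ℝ) ≤ (n:ℝ) := by exact_mod_cast hn
  have hne : 2 * ((n:ℝ) - 1) ≠ 0 := by intro h; nlinarith
  have hne' : (n:ℝ) - 1 ≠ 0 := by intro h; nlinarith
  rw [sigma_one_sum]
  simp only [ALam]
  rw [Finset.sum_sub_distrib, Finset.sum_const, Finset.card_univ, Fintype.card_fin]
  simp only [nsmul_eq_mul]
  field_simp
  ring

theorem pos_of_gamma_k_big (n k : ℕ) (hn : 3 ≤ n) (hk : 2 ≤ k) (hkn : k ≤ n)
    (h2k : n ≤ 2 * k) (Λ : Fin n → ℝ) :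
    (ALam n Λ ∈ GammaPlus n k → ∀ i, 0 < Λ i) ∧
    (ALam n Λ ∈ closure (GammaPlus n k) → ∀ i, 0 ≤ Λ i) := by
  have h3 : (3:ℝ) ≤ (n:ℝ) := by exact_mod_cast hn
  have hn2 : (0:ℝ) < (n:ℝ) - 2 := by linarith
  have hstrict : ∀ x ∈ GammaPlus n k, ∀ i, 0 < ((n:ℝ) - 2) * x i + sigmaElem n 1 x := by
    intro x hx
    exact key n k hn hk hkn h2k x (gamma_subset_S n k (by omega) hkn hx)
  constructor
  · intro hA i
    have := hstrict _ hA i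
    rw [alam_identity n hn Λ i] at this
    nlinarith
  · intro hA i
    set Ci := {x : Fin n → ℝ | 0 ≤ ((n:ℝ) - 2) * x i + sigmaElem n 1 x} with hCi
    have hclosed : IsClosed Ci := by
      apply isClosed_le continuous_const
      exact Continuous.add (Continuous.mul continuous_const (continuous_apply i))
        (sigma_continuous n 1)
    have hsub : GammaPlus n k ⊆ Ci := fun x hx => (hstrict x hx i).le
    have := closure_minimal hsub hclosed hA
    rw [hCi, Set.mem_setOf_eq, alam_identity n hn Λ i] at this
    nlinarith


end GammaAux

open GammaAux in
/-- Theorem 1, pointwise eigenvalue form: for `k ≥ n/2`,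
`A_Λ ∈ Γ_k^+` implies all `λ_i > 0`, and `A_Λ ∈ Γ̄_k^+` implies all `λ_i ≥ 0`. -/
theorem pos_of_gamma_k_big (n k : ℕ) (hn : 3 ≤ n) (hk : 2 ≤ k) (hkn : k ≤ n)
    (h2k : n ≤ 2 * k) (Λ : Fin n → ℝ) :
    (ALam n Λ ∈ GammaPlus n k → ∀ i, 0 < Λ i) ∧
    (ALam n Λ ∈ closure (GammaPlus n k) → ∀ i, 0 ≤ Λ i) := by
  have h3 : (3:ℝ) ≤ (n:ℝ) := by exact_mod_cast hn
  have hn2 : (0:ℝ) < (n:ℝ) - 2 := by linarith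
  have hstrict : ∀ x ∈ GammaPlus n k, ∀ i, 0 < ((n:ℝ) - 2) * x i + sigmaElem n 1 x := by
    intro x hx
    exact key n k hn hk hkn h2k x (gamma_subset_S n k (by omega) hkn hx)
  constructor
  · intro hA i
    have := hstrict _ hA i
    rw [alam_identity n hn Λ i] at this
    nlinarith
  · intro hA i
    set Ci := {x : Fin n → ℝ | 0 ≤ ((n:ℝ) - 2) * x i + sigmaElem n 1 x} with hCi
    have hclosed : IsClosed Ci := by
      apply isClosed_le continuous_const
      exact Continuous.add (Continuous.mul continuous_const (continuous_apply i))
        (sigma_continuous n 1)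
    have hsub : GammaPlus n k ⊆ Ci := fun x hx => (hstrict x hx i).le
    have := closure_minimal hsub hclosed hA
    rw [hCi, Set.mem_setOf_eq, alam_identity n hn Λ i] at this
    nlinarith
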